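/- Let (X, d, μ) be a metric measure space satisfying the lens overlap condition: there exists C ≥ 1 such that for all x ≠ y with r = d(x,y), μ(B(x,r)) ≤ C μ(B(x,r) ∩ B(y,r)) and μ(B(y,r)) ≤ C μ(B(x,r) ∩ B(y,r)). Then for f ∈ L^1_loc(X, μ) and all points x ≠ y at which MQf is defined, |f(x) − f(y)| ≤ C d(x,y)(MQf(x) + MQf(y)), where MQf(x) = sup_{r>0} (1/μ(B(x,r))) ∫_{B(x,r)} |f(z) − f(x)|/d(z,x) dμ(z). -/

import Mathlib

open MeasureTheory Metric

/-- The maximal mean difference quotient on a metric measure space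
(values in `ℝ≥0∞`). -/
noncomputable def MQm {X : Type*} [MetricSpace X] [MeasurableSpace X]
    (μ : Measure X) (f : X → ℝ) (x : X) : ENNReal :=
  ⨆ (r : ℝ) (_ : 0 < r),
    (μ (ball x r))⁻¹ * ∫⁻ z in ball x r, ENNReal.ofReal (|f z - f x| / dist z x) ∂μ

/-- A locally integrable function is a.e. strongly measurable on any open set of
finite measure, for a regular measure. -/
lemma aux_asm {X : Type*} [MetricSpace X] [MeasurableSpace X] [BorelSpace X]
    (μ : Measure X) [μ.Regular] (f : X → ℝ) (hf : LocallyIntegrable f μ)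
    (s : Set X) (hs : IsOpen s) (hfin : μ s ≠ ⊤) :
    AEStronglyMeasurable f (μ.restrict s) := by
  rcases eq_or_ne (μ s) 0 with h0 | h0
  · rw [Measure.restrict_eq_zero.mpr h0]
    exact aestronglyMeasurable_zero_measure f
  · -- pick compacts approximating s from inside
    have hK : ∀ n : ℕ, ∃ K ⊆ s, IsCompact K ∧ μ s - ((n : ENNReal) + 1)⁻¹ < μ K := by
      intro n
      refine hs.exists_lt_isCompact ?_
      exact ENNReal.sub_lt_self hfin h0 (by simp)
    choose K hKs hKc hKlt using hK
    have hdiff : ∀ n : ℕ, μ (s \ K n) ≤ ((n : ENNReal) + 1)⁻¹ := by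
      intro n
      have hKfin : μ (K n) ≠ ⊤ := ne_top_of_le_ne_top hfin (measure_mono (hKs n))
      have h1 : μ (s \ K n) = μ s - μ (K n) :=
        measure_diff (hKs n) (hKc n).measurableSet.nullMeasurableSet hKfin
      rw [h1, tsub_le_iff_right]
      rcases le_total (μ s) (((n : ENNReal) + 1)⁻¹) with h | h
      · exact h.trans le_self_add
      · calc μ s = (μ s - ((n : ENNReal) + 1)⁻¹) + ((n : ENNReal) + 1)⁻¹ :=
              (tsub_add_cancel_of_le h).symm
          _ ≤ μ (K n) + ((n : ENNReal) + 1)⁻¹ := add_le_add_left (hKlt n).le _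
          _ = ((n : ENNReal) + 1)⁻¹ + μ (K n) := add_comm _ _
    have hzero : μ (s \ ⋃ n, K n) = 0 := by
      by_contra h
      obtain ⟨n, hn⟩ := ENNReal.exists_inv_nat_lt h
      have h1 : μ (s \ ⋃ n, K n) ≤ ((n : ENNReal) + 1)⁻¹ :=
        le_trans (measure_mono (Set.diff_subset_diff_right (Set.subset_iUnion K n))) (hdiff n)
      have h2 : ((n : ENNReal) + 1)⁻¹ ≤ ((n : ENNReal))⁻¹ :=
        ENNReal.inv_le_inv' le_self_add
      exact absurd (h1.trans h2) (not_le.mpr hn)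
    have hU : AEStronglyMeasurable f (μ.restrict (⋃ n, K n)) := by
      rw [aestronglyMeasurable_iUnion_iff]
      exact fun n => (hf.integrableOn_isCompact (hKc n)).aestronglyMeasurable
    refine hU.mono_measure ?_
    have h1 : μ.restrict s ≤ μ.restrict ((⋃ n, K n) ∪ (s \ ⋃ n, K n)) :=
      Measure.restrict_mono (fun z hz => by
        by_cases hz' : z ∈ ⋃ n, K n
        · exact Or.inl hz'
        · exact Or.inr ⟨hz, hz'⟩) le_rfl
    have h2 : μ.restrict ((⋃ n, K n) ∪ (s \ ⋃ n, K n)) ≤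
        μ.restrict (⋃ n, K n) + μ.restrict (s \ ⋃ n, K n) :=
      Measure.restrict_union_le _ _
    have h3 : μ.restrict (s \ ⋃ n, K n) = 0 := Measure.restrict_eq_zero.mpr hzero
    calc μ.restrict s ≤ μ.restrict (⋃ n, K n) + μ.restrict (s \ ⋃ n, K n) := h1.trans h2
      _ = μ.restrict (⋃ n, K n) := by rw [h3, add_zero]

/-- Key estimate: the integral of `|f z - f p|` over a ball is controlled by the
maximal mean difference quotient at the center. -/
lemma aux_ball_bound {X : Type*} [MetricSpace X] [MeasurableSpace X] [BorelSpace X]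
    (μ : Measure X) (f : X → ℝ) (p : X) (r : ℝ) (hr : 0 < r)
    (hpos : μ (ball p r) ≠ 0) (hfin : μ (ball p r) ≠ ⊤) :
    ∫⁻ z in ball p r, ENNReal.ofReal |f z - f p| ∂μ ≤
      ENNReal.ofReal r * (μ (ball p r) * MQm μ f p) := by
  have h1 : ∫⁻ z in ball p r, ENNReal.ofReal |f z - f p| ∂μ ≤
      ∫⁻ z in ball p r, ENNReal.ofReal r * ENNReal.ofReal (|f z - f p| / dist z p) ∂μ := by
    refine setLIntegral_mono' measurableSet_ball fun z hz => ?_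
    rw [← ENNReal.ofReal_mul hr.le]
    refine ENNReal.ofReal_le_ofReal ?_
    rcases eq_or_lt_of_le (dist_nonneg : (0:ℝ) ≤ dist z p) with hd | hd
    · have hzp : z = p := dist_eq_zero.mp hd.symm
      simp [hzp]
    · have hzr : dist z p < r := mem_ball.mp hz
      rw [mul_comm, div_mul_eq_mul_div, le_div_iff₀ hd]
      have habs : 0 ≤ |f z - f p| := abs_nonneg _
      nlinarith
  have h2 : ∫⁻ z in ball p r, ENNReal.ofReal r * ENNReal.ofReal (|f z - f p| / dist z p) ∂μ =
      ENNReal.ofReal r * ∫⁻ z in ball p r, ENNReal.ofReal (|f z - f p| / dist z p) ∂μ :=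
    lintegral_const_mul' _ _ ENNReal.ofReal_ne_top
  have h3 : ∫⁻ z in ball p r, ENNReal.ofReal (|f z - f p| / dist z p) ∂μ ≤
      μ (ball p r) * MQm μ f p := by
    have hM : (μ (ball p r))⁻¹ *
        ∫⁻ z in ball p r, ENNReal.ofReal (|f z - f p| / dist z p) ∂μ ≤ MQm μ f p :=
      le_iSup₂ (f := fun (r : ℝ) (_ : 0 < r) =>
        (μ (ball p r))⁻¹ * ∫⁻ z in ball p r, ENNReal.ofReal (|f z - f p| / dist z p) ∂μ) r hr
    calc ∫⁻ z in ball p r, ENNReal.ofReal (|f z - f p| / dist z p) ∂μ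
        = μ (ball p r) * ((μ (ball p r))⁻¹ *
            ∫⁻ z in ball p r, ENNReal.ofReal (|f z - f p| / dist z p) ∂μ) := by
          rw [← mul_assoc, ENNReal.mul_inv_cancel hpos hfin, one_mul]
      _ ≤ μ (ball p r) * MQm μ f p := mul_le_mul_right hM _
  calc ∫⁻ z in ball p r, ENNReal.ofReal |f z - f p| ∂μ
      ≤ ENNReal.ofReal r * ∫⁻ z in ball p r, ENNReal.ofReal (|f z - f p| / dist z p) ∂μ :=
        h1.trans_eq h2
    _ ≤ ENNReal.ofReal r * (μ (ball p r) * MQm μ f p) := mul_le_mul_right h3 _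

/-- On a metric measure space `(X, d, μ)` satisfying the lens overlap condition with
constant `C`, every locally integrable `f` satisfies the pointwise Sobolev inequality
`|f x - f y| ≤ C d(x,y) (MQf(x) + MQf(y))` for all `x ≠ y`. -/
theorem pointwise_sobolev_metric {X : Type*} [MetricSpace X] [CompleteSpace X]
    [MeasurableSpace X] [BorelSpace X] (μ : Measure X) [μ.Regular]
    (hball_pos : ∀ (x : X) (r : ℝ), 0 < r → 0 < μ (ball x r))
    (hball_fin : ∀ (x : X) (r : ℝ), 0 < r → μ (ball x r) ≠ ⊤)
    (C : ℝ) (hC : 1 ≤ C)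
    (hlens : ∀ x y : X, x ≠ y →
      μ (ball x (dist x y)) ≤
          ENNReal.ofReal C * μ (ball x (dist x y) ∩ ball y (dist x y)) ∧
      μ (ball y (dist x y)) ≤
          ENNReal.ofReal C * μ (ball x (dist x y) ∩ ball y (dist x y)))
    (f : X → ℝ) (hf : LocallyIntegrable f μ) :
    ∀ x y : X, x ≠ y →
      ENNReal.ofReal |f x - f y| ≤
        ENNReal.ofReal (C * dist x y) * (MQm μ f x + MQm μ f y) := by
  intro x y hxy
  set r := dist x y with hrdef
  have hr : 0 < r := dist_pos.mpr hxy
  set L := ball x r ∩ ball y r with hLdef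
  obtain ⟨hlx, hly⟩ := hlens x y hxy
  have hL_ne : μ L ≠ 0 := by
    intro h0
    rw [h0, mul_zero] at hlx
    exact absurd (le_antisymm hlx zero_le) (hball_pos x r hr).ne'
  have hL_fin : μ L ≠ ⊤ :=
    ne_top_of_le_ne_top (hball_fin x r hr) (measure_mono Set.inter_subset_left)
  -- a.e. measurability on L
  have hasm : AEStronglyMeasurable f (μ.restrict L) :=
    (aux_asm μ f hf (ball x r) isOpen_ball (hball_fin x r hr)).mono_measure
      (Measure.restrict_mono Set.inter_subset_left le_rfl)
  have hmx : AEMeasurable (fun z => ENNReal.ofReal |f z - f x|) (μ.restrict L) :=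
    ENNReal.measurable_ofReal.comp_aemeasurable
      (continuous_abs.measurable.comp_aemeasurable
        (hasm.aemeasurable.sub aemeasurable_const))
  have key : ENNReal.ofReal |f x - f y| * μ L ≤
      (ENNReal.ofReal (C * r) * (MQm μ f x + MQm μ f y)) * μ L := by
    calc ENNReal.ofReal |f x - f y| * μ L
        = ∫⁻ _ in L, ENNReal.ofReal |f x - f y| ∂μ := (setLIntegral_const L _).symm
      _ ≤ ∫⁻ z in L, (ENNReal.ofReal |f z - f x| + ENNReal.ofReal |f z - f y|) ∂μ := by
          refine lintegral_mono fun z => ?_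
          calc ENNReal.ofReal |f x - f y| ≤ ENNReal.ofReal (|f z - f x| + |f z - f y|) := by
                refine ENNReal.ofReal_le_ofReal ?_
                have := abs_sub_abs_le_abs_sub (f x - f y) 0
                calc |f x - f y| = |(f x - f z) + (f z - f y)| := by ring_nf
                  _ ≤ |f x - f z| + |f z - f y| := abs_add_le _ _
                  _ = |f z - f x| + |f z - f y| := by rw [abs_sub_comm (f x) (f z)]
            _ ≤ ENNReal.ofReal |f z - f x| + ENNReal.ofReal |f z - f y| :=
                ENNReal.ofReal_add_le
      _ = (∫⁻ z in L, ENNReal.ofReal |f z - f x| ∂μ) +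
            ∫⁻ z in L, ENNReal.ofReal |f z - f y| ∂μ := lintegral_add_left' hmx _
      _ ≤ (∫⁻ z in ball x r, ENNReal.ofReal |f z - f x| ∂μ) +
            ∫⁻ z in ball y r, ENNReal.ofReal |f z - f y| ∂μ :=
          add_le_add (lintegral_mono_set Set.inter_subset_left)
            (lintegral_mono_set Set.inter_subset_right)
      _ ≤ ENNReal.ofReal r * (μ (ball x r) * MQm μ f x) +
            ENNReal.ofReal r * (μ (ball y r) * MQm μ f y) :=
          add_le_add
            (aux_ball_bound μ f x r hr (hball_pos x r hr).ne' (hball_fin x r hr))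
            (aux_ball_bound μ f y r hr (hball_pos y r hr).ne' (hball_fin y r hr))
      _ ≤ ENNReal.ofReal r * ((ENNReal.ofReal C * μ L) * MQm μ f x) +
            ENNReal.ofReal r * ((ENNReal.ofReal C * μ L) * MQm μ f y) := by
          gcongr
      _ = (ENNReal.ofReal (C * r) * (MQm μ f x + MQm μ f y)) * μ L := by
          rw [ENNReal.ofReal_mul (by linarith : (0:ℝ) ≤ C)]
          ring
  exact (ENNReal.mul_le_mul_iff_left hL_ne hL_fin).mp key
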